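/- arXiv:1604.06247 — 2 statements merged into one kernel-verified Lean document; each statement's English description precedes it below -/
import Mathlib

section
/- Let R be a commutative ring, φ : E → F a homomorphism of finitely generated free R-modules with rank(F) = m, and 1 ≤ j ≤ m. Define φ_{m+1-j} : E ⊗ Λ^{m-j}F → Λ^{m+1-j}F by a ⊗ w ↦ φ(a) ∧ w. Then ann(coker(φ_{m+1-j})) = ann(Λ^{m+1-j}(coker φ)). -/
open TensorProduct

namespace Stmt9Helpers
open ExteriorAlgebra
variable {R F G : Type*} [CommRing R] [AddCommGroup F] [Module R F] [AddCommGroup G] [Module R G]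

lemma mem_map_exterior (f : F →ₗ[R] G) (n : ℕ) {x} (hx : x ∈ ⋀[R]^n F) :
    ExteriorAlgebra.map f x ∈ ⋀[R]^n G := by
  have h : Submodule.map (ExteriorAlgebra.map f).toLinearMap (⋀[R]^n F) ≤ ⋀[R]^n G := by
    rw [exteriorPower, exteriorPower, Submodule.map_pow, ι_range_map_map]
    refine pow_le_pow_left' ?_ n
    exact (Submodule.map_mono le_top).trans (by rw [Submodule.map_top])
  exact h ⟨x, hx, rfl⟩

lemma map_exterior_surj (f : F →ₗ[R] G) (hf : Function.Surjective f) (n : ℕ) {y}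
    (hy : y ∈ ⋀[R]^n G) : ∃ x, ∃ _ : x ∈ ⋀[R]^n F, ExteriorAlgebra.map f x = y := by
  have h : Submodule.map (ExteriorAlgebra.map f).toLinearMap (⋀[R]^n F) = ⋀[R]^n G := by
    rw [exteriorPower, exteriorPower, Submodule.map_pow, ι_range_map_map,
      LinearMap.range_eq_top.mpr hf, Submodule.map_top]
  rw [← h] at hy
  obtain ⟨x, hx, hxy⟩ := Submodule.mem_map.mp hy
  exact ⟨x, hx, hxy⟩

variable {E : Type*} [AddCommGroup E] [Module R E]

set_option maxHeartbeats 2000000 in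
theorem aux (φ : E →ₗ[R] F) (p q : ℕ) (hq : q = p + 1)
    (ψ : (E ⊗[R] ↥(⋀[R]^p F)) →ₗ[R] ↥(⋀[R]^q F))
    (hψ : ∀ (a : E) (w : ⋀[R]^p F),
      (ψ (a ⊗ₜ[R] w) : ExteriorAlgebra R F) =
        ExteriorAlgebra.ι R (φ a) * (w : ExteriorAlgebra R F)) :
    Module.annihilator R (↥(⋀[R]^q F) ⧸ LinearMap.range ψ) =
      Module.annihilator R ↥(⋀[R]^q (F ⧸ LinearMap.range φ)) := by
  subst hq
  set N := LinearMap.range φ with hN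
  set π : F →ₗ[R] F ⧸ N := N.mkQ with hπ
  set K : Submodule R ↥(⋀[R]^(p+1) F) := LinearMap.range ψ with hK
  -- the alternating map F^(p+1) → ⋀^(p+1)F ⧸ K
  set A : F [⋀^Fin (p+1)]→ₗ[R] (↥(⋀[R]^(p+1) F) ⧸ K) :=
    K.mkQ.compAlternatingMap
      ((ιMulti R (p+1)).codRestrict (⋀[R]^(p+1) F)
        (fun v => ιMulti_range R (p+1) (Set.mem_range_self v))) with hA
  have hAapply : ∀ v : Fin (p+1) → F, A v =
      Submodule.Quotient.mk ⟨ιMulti R (p+1) v, ιMulti_range R (p+1) (Set.mem_range_self v)⟩ :=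
    fun v => rfl
  -- vanishing when a coordinate is in N
  have vanish0 : ∀ (v : Fin (p+1) → F), v 0 ∈ N → A v = 0 := by
    intro v hv0
    obtain ⟨a, ha⟩ := hv0
    rw [hAapply, Submodule.Quotient.mk_eq_zero]
    have hw : ιMulti R p (Matrix.vecTail v) ∈ ⋀[R]^p F :=
      ιMulti_range R p (Set.mem_range_self _)
    refine ⟨a ⊗ₜ[R] ⟨_, hw⟩, ?_⟩
    apply Subtype.ext
    rw [hψ]
    simp only [ha, ιMulti_succ_apply]
  have vanish : ∀ (v : Fin (p+1) → F) (i : Fin (p+1)), v i ∈ N → A v = 0 := by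
    intro v i hvi
    by_cases h0 : i = 0
    · exact vanish0 v (h0 ▸ hvi)
    · have hswap := A.map_swap v (Ne.symm h0)
      have hz : A (v ∘ Equiv.swap 0 i) = 0 := by
        refine vanish0 _ ?_
        simpa [Equiv.swap_apply_left] using hvi
      rw [hz] at hswap
      exact neg_eq_zero.mp hswap.symm
  -- invariance: A depends only on coordinates mod N
  have key : ∀ v w : Fin (p+1) → F, (∀ t, π (v t) = π (w t)) → A v = A w := by
    intro v w hvw
    have main : ∀ s : Finset (Fin (p+1)), A (s.piecewise v w) = A w := by
      intro s
      induction s using Finset.induction_on with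
      | empty => rw [Finset.piecewise_empty]
      | @insert a s ha ih =>
          rw [Finset.piecewise_insert]
          set u := s.piecewise v w with hu
          have hua : u a = w a := Finset.piecewise_eq_of_notMem _ _ _ ha
          have hsub : A (Function.update u a (v a)) - A (Function.update u a (w a)) =
              A (Function.update u a (v a - w a)) := by
            rw [A.map_update_sub]
          have hz : A (Function.update u a (v a - w a)) = 0 := by
            refine vanish _ a ?_
            rw [Function.update_self]
            have h2 : π (v a - w a) = 0 := by rw [map_sub, hvw a, sub_self]
            rwa [Submodule.mkQ_apply, Submodule.Quotient.mk_eq_zero] at h2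
          have hue : Function.update u a (w a) = u := by
            funext t
            by_cases ht : t = a
            · subst ht; rw [Function.update_self, hua]
            · rw [Function.update_of_ne ht]
          rw [hue] at hsub
          have := sub_eq_zero.mp (hsub.trans hz)
          rw [this, ih]
    have := main Finset.univ
    rwa [Finset.piecewise_univ] at this
  -- a set-theoretic section of π
  have hπsurj : Function.Surjective π := Submodule.mkQ_surjective N
  set σ : (F ⧸ N) → F := Function.surjInv hπsurj with hσdef
  have hσ : ∀ x, π (σ x) = x := fun x => Function.surjInv_eq hπsurj x
  -- the descended alternating map on F ⧸ N
  set g : (F ⧸ N) [⋀^Fin (p+1)]→ₗ[R] (↥(⋀[R]^(p+1) F) ⧸ K) :=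
    { toFun := fun u => A (σ ∘ u)
      map_update_add' := by
        intro dec u i x y
        rw [Function.comp_update, Function.comp_update, Function.comp_update,
          key (Function.update (σ ∘ u) i (σ (x + y)))
            (Function.update (σ ∘ u) i (σ x + σ y)) ?_, A.map_update_add]
        intro t
        by_cases ht : t = i
        · subst ht
          rw [Function.update_self, Function.update_self, map_add, hσ, hσ, hσ]
        · rw [Function.update_of_ne ht, Function.update_of_ne ht]
      map_update_smul' := by
        intro dec u i c x
        rw [Function.comp_update, Function.comp_update,
          key (Function.update (σ ∘ u) i (σ (c • x)))
            (Function.update (σ ∘ u) i (c • σ x)) ?_, A.map_update_smul]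
        intro t
        by_cases ht : t = i
        · subst ht
          rw [Function.update_self, Function.update_self, map_smul, hσ, hσ]
        · rw [Function.update_of_ne ht, Function.update_of_ne ht]
      map_eq_zero_of_eq' := by
        intro u i j hij hne
        exact A.map_eq_zero_of_eq (σ ∘ u)
          (by simp only [Function.comp_apply, hij]) hne } with hg
  have hgapply : ∀ u : Fin (p+1) → F ⧸ N, g u = A (σ ∘ u) := fun u => rfl
  -- the lift out of the exterior algebra of F ⧸ N
  set f : ∀ i : ℕ, (F ⧸ N) [⋀^Fin i]→ₗ[R] (↥(⋀[R]^(p+1) F) ⧸ K) :=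
    Function.update (fun i => (0 : (F ⧸ N) [⋀^Fin i]→ₗ[R] (↥(⋀[R]^(p+1) F) ⧸ K))) (p+1) g
    with hf
  set G : ExteriorAlgebra R (F ⧸ N) →ₗ[R] (↥(⋀[R]^(p+1) F) ⧸ K) :=
    ExteriorAlgebra.liftAlternating f with hG
  have hGιMulti : ∀ u : Fin (p+1) → F ⧸ N, G (ιMulti R (p+1) u) = g u := by
    intro u
    rw [hG, liftAlternating_apply_ιMulti, hf, Function.update_self]
  -- the master identity
  have master : ∀ (x : ExteriorAlgebra R F) (hx : x ∈ ⋀[R]^(p+1) F),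
      G (ExteriorAlgebra.map π x) = Submodule.Quotient.mk ⟨x, hx⟩ := by
    have hspan : ∀ x, x ∈ Submodule.span R (Set.range (ιMulti R (p+1) (M := F))) →
        ∀ hx : x ∈ ⋀[R]^(p+1) F,
          G (ExteriorAlgebra.map π x) = Submodule.Quotient.mk ⟨x, hx⟩ := by
      intro x hmem
      induction hmem using Submodule.span_induction with
      | mem x hx =>
          intro hx2
          obtain ⟨v, rfl⟩ := hx
          rw [map_apply_ιMulti, hGιMulti, hgapply,
            key (σ ∘ (⇑π ∘ v)) v (fun t => hσ (π (v t)))]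
          exact hAapply v
      | zero =>
          intro hx2
          rw [map_zero, map_zero]
          exact (Submodule.Quotient.mk_eq_zero _).mpr (Submodule.zero_mem K) |>.symm
      | add x y hx hy ihx ihy =>
          intro hxy
          have hx2 : x ∈ ⋀[R]^(p+1) F := by
            rw [← ιMulti_span_fixedDegree]; exact hx
          have hy2 : y ∈ ⋀[R]^(p+1) F := by
            rw [← ιMulti_span_fixedDegree]; exact hy
          rw [map_add, map_add, ihx hx2, ihy hy2]
          rfl
      | smul c x hx ihx =>
          intro hx2
          have hx2' : x ∈ ⋀[R]^(p+1) F := by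
            rw [← ιMulti_span_fixedDegree]; exact hx
          rw [map_smul, map_smul, ihx hx2']
          rfl
    intro x hx
    exact hspan x (by rw [ιMulti_span_fixedDegree]; exact hx) hx
  -- elements of K die in the exterior algebra of F ⧸ N
  have hzero : ∀ z : ↥(⋀[R]^(p+1) F), z ∈ K →
      ExteriorAlgebra.map π (z : ExteriorAlgebra R F) = 0 := by
    intro z hz
    obtain ⟨t, rfl⟩ := hz
    induction t with
    | zero => rw [map_zero]; exact map_zero _
    | tmul a w =>
        rw [hψ, map_mul, map_apply_ι]
        have : π (φ a) = 0 := by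
          rw [hπ, Submodule.mkQ_apply, Submodule.Quotient.mk_eq_zero]
          exact ⟨a, rfl⟩
        rw [this, map_zero, zero_mul]
    | add t₁ t₂ ih₁ ih₂ =>
        rw [map_add, Submodule.coe_add, map_add, ih₁, ih₂, add_zero]
  -- conclude
  apply le_antisymm
  · intro r hr
    rw [Module.mem_annihilator] at hr ⊢
    intro y
    obtain ⟨x, hx, hxy⟩ := map_exterior_surj π hπsurj (p+1) y.2
    have h1 : r • (⟨x, hx⟩ : ⋀[R]^(p+1) F) ∈ K := by
      have := hr (Submodule.Quotient.mk ⟨x, hx⟩)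
      rwa [← Submodule.Quotient.mk_smul, Submodule.Quotient.mk_eq_zero] at this
    have h2 := hzero _ h1
    apply Subtype.ext
    show ((r • y : ↥(⋀[R]^(p+1) (F ⧸ N))) : ExteriorAlgebra R (F ⧸ N)) = 0
    rw [Submodule.coe_smul, ← hxy, ← map_smul]
    simpa using h2
  · intro r hr
    rw [Module.mem_annihilator] at hr ⊢
    intro c
    obtain ⟨z, rfl⟩ := Submodule.Quotient.mk_surjective K c
    rw [← Submodule.Quotient.mk_smul]
    have hm : ExteriorAlgebra.map π (z : ExteriorAlgebra R F) ∈ ⋀[R]^(p+1) (F ⧸ N) :=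
      mem_map_exterior π (p+1) z.2
    have h0 : r • (⟨_, hm⟩ : ↥(⋀[R]^(p+1) (F ⧸ N))) = 0 := hr _
    have h1 : ExteriorAlgebra.map π ((r • z : ↥(⋀[R]^(p+1) F)) : ExteriorAlgebra R F) = 0 := by
      have := congrArg Subtype.val h0
      simpa [← map_smul] using this
    have h2 := master ((r • z : ↥(⋀[R]^(p+1) F)) : ExteriorAlgebra R F) (r • z).2
    rw [h1, map_zero] at h2
    exact h2.symm


end Stmt9Helpers

theorem stmt9 {R : Type*} [CommRing R] {E F : Type*}
    [AddCommGroup E] [Module R E] [Module.Free R E] [Module.Finite R E]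
    [AddCommGroup F] [Module R F] [Module.Free R F] [Module.Finite R F]
    {m : ℕ} (hF : Module.rank R F = m) (φ : E →ₗ[R] F)
    (j : ℕ) (hj1 : 1 ≤ j) (hjm : j ≤ m)
    (ψ : (E ⊗[R] ↥(⋀[R]^(m - j) F)) →ₗ[R] ↥(⋀[R]^(m + 1 - j) F))
    (hψ : ∀ (a : E) (w : ⋀[R]^(m - j) F),
      (ψ (a ⊗ₜ[R] w) : ExteriorAlgebra R F) =
        ExteriorAlgebra.ι R (φ a) * (w : ExteriorAlgebra R F)) :
    Module.annihilator R (↥(⋀[R]^(m + 1 - j) F) ⧸ LinearMap.range ψ) =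
      Module.annihilator R ↥(⋀[R]^(m + 1 - j) (F ⧸ LinearMap.range φ)) := by
  exact Stmt9Helpers.aux φ (m - j) (m + 1 - j) (by omega) ψ hψ
end

section
/- Let k be a field and V the k-vector space of m×m matrices. For a generic matrix A ∈ Mat_{m×m}(k), the space {U ∈ Mat_{m×m}(k) : UA + AUᵀ = 0} has dimension at least ⌊m/2⌋; equivalently the image of the map U ↦ UA + AUᵀ has codimension at least ⌊m/2⌋ in Mat_{m×m}(k). -/
set_option linter.unusedSectionVars false
set_option linter.unusedVariables false
set_option maxHeartbeats 2000000

/-- The linear map `U ↦ U·A + A·Uᵀ` on `m × m` matrices. -/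
def congrTangentMap {k : Type*} [Field k] {m : ℕ} (A : Matrix (Fin m) (Fin m) k) :
    Matrix (Fin m) (Fin m) k →ₗ[k] Matrix (Fin m) (Fin m) k where
  toFun U := U * A + A * U.transpose
  map_add' U V := by
    simp [Matrix.add_mul, Matrix.mul_add, Matrix.transpose_add]
    abel
  map_smul' c U := by
    simp [Matrix.smul_mul, Matrix.mul_smul, Matrix.transpose_smul, smul_add]

open Matrix Polynomial

namespace CongAux

noncomputable section

variable {R : Type*} [CommRing R] {ι : Type*} [Fintype ι] [DecidableEq ι]

/-- The pencil `x ↦ x • A + Aᵀ` as a matrix of polynomials. -/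
def pen (A : Matrix ι ι R) : Matrix ι ι (Polynomial R) :=
  Matrix.of fun i j => X * C (A i j) + C (A j i)

lemma pen_eq (A : Matrix ι ι R) :
    pen A = (X : Polynomial R) • A.map (C : R → Polynomial R) + (A.map (C : R → Polynomial R))ᵀ := by
  refine Matrix.ext fun i j => ?_
  simp [pen, Matrix.map_apply, smul_eq_mul]

lemma pen_zero : pen (0 : Matrix ι ι R) = 0 := by
  refine Matrix.ext fun i j => ?_; simp [pen]

lemma pen_add (A B : Matrix ι ι R) : pen (A + B) = pen A + pen B := by
  refine Matrix.ext fun i j => ?_; simp [pen]; ring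

lemma pen_smul (c : R) (B : Matrix ι ι R) : pen (c • B) = C c • pen B := by
  refine Matrix.ext fun i j => ?_; simp [pen, smul_eq_mul]; ring

lemma pen_map {S : Type*} [CommRing S] (φ : R →+* S) (A : Matrix ι ι R) :
    (pen A).map (Polynomial.mapRingHom φ) = pen (A.map φ) := by
  refine Matrix.ext fun i j => ?_
  simp [pen, Matrix.map_apply]

lemma pen_transform (A U : Matrix ι ι R) :
    pen (U * A + A * Uᵀ) = U.map (C : R → Polynomial R) * pen A
      + pen A * (U.map (C : R → Polynomial R))ᵀ := by
  have h1 : (U * A).map (C : R → Polynomial R)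
      = U.map (C : R → Polynomial R) * A.map (C : R → Polynomial R) := by
    simpa using Matrix.map_mul (L := U) (M := A) (f := (C : R →+* Polynomial R))
  have h2 : (A * Uᵀ).map (C : R → Polynomial R)
      = A.map (C : R → Polynomial R) * (U.map (C : R → Polynomial R))ᵀ := by
    have := Matrix.map_mul (L := A) (M := Uᵀ) (f := (C : R →+* Polynomial R))
    simpa [Matrix.transpose_map] using this
  rw [pen_eq, pen_eq]
  have hadd : (U * A + A * Uᵀ).map (C : R → Polynomial R)
      = U.map (C : R → Polynomial R) * A.map (C : R → Polynomial R)
        + A.map (C : R → Polynomial R) * (U.map (C : R → Polynomial R))ᵀ := by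
    have : (U * A + A * Uᵀ).map (C : R → Polynomial R)
        = (U * A).map (C : R → Polynomial R) + (A * Uᵀ).map (C : R → Polynomial R) :=
      Matrix.ext fun i j => by simp only [Matrix.map_apply, Matrix.add_apply, map_add]
    rw [this, h1, h2]
  rw [hadd]
  set U' := U.map (C : R → Polynomial R)
  set A' := A.map (C : R → Polynomial R)
  rw [smul_add, Matrix.transpose_add, Matrix.transpose_mul, Matrix.transpose_mul,
    Matrix.transpose_transpose]
  rw [Matrix.mul_add, Matrix.add_mul]
  rw [Matrix.mul_smul, Matrix.smul_mul]
  abel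

/-- The Jacobi differential of the pencil determinant at `A` in direction `B`. -/
def deltaFun (A B : Matrix ι ι R) : Polynomial R :=
  Matrix.trace (adjugate (pen A) * pen B)

lemma trace_map {S : Type*} [CommRing S] (φ : R →+* S) (M : Matrix ι ι R) :
    Matrix.trace (M.map φ) = φ (Matrix.trace M) := by
  simp [Matrix.trace, Matrix.diag, map_sum, Matrix.map_apply]

lemma deltaFun_key (A U : Matrix ι ι R) :
    deltaFun A (U * A + A * Uᵀ) = C (2 * Matrix.trace U) * (pen A).det := by
  rw [deltaFun, pen_transform, Matrix.mul_add, Matrix.trace_add]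
  have hC : Matrix.trace (U.map (C : R → Polynomial R)) = C (Matrix.trace U) := by
    simp [Matrix.trace, Matrix.diag, Matrix.map_apply, map_sum]
  have t1 : Matrix.trace (adjugate (pen A) * (U.map (C : R → Polynomial R) * pen A))
      = (pen A).det * C (Matrix.trace U) := by
    rw [← Matrix.mul_assoc, Matrix.trace_mul_comm, ← Matrix.mul_assoc, Matrix.mul_adjugate,
      Matrix.smul_mul, Matrix.one_mul, Matrix.trace_smul, hC, smul_eq_mul]
  have t2 : Matrix.trace (adjugate (pen A) * (pen A * (U.map (C : R → Polynomial R))ᵀ))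
      = (pen A).det * C (Matrix.trace U) := by
    rw [← Matrix.mul_assoc, Matrix.adjugate_mul, Matrix.smul_mul, Matrix.one_mul,
      Matrix.trace_smul, Matrix.trace_transpose, hC, smul_eq_mul]
  rw [t1, t2, Polynomial.C_mul, map_ofNat]
  ring

lemma deltaFun_map {S : Type*} [CommRing S] (φ : R →+* S) (A B : Matrix ι ι R) :
    (deltaFun A B).map φ = deltaFun (A.map φ) (B.map φ) := by
  rw [deltaFun, deltaFun, ← pen_map φ A, ← pen_map φ B]
  have hadj : adjugate ((pen A).map (Polynomial.mapRingHom φ))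
      = (adjugate (pen A)).map (Polynomial.mapRingHom φ) :=
    ((Polynomial.mapRingHom φ).map_adjugate (pen A)).symm
  rw [hadj, ← Matrix.map_mul, trace_map]
  rfl

lemma trace_submatrix_equiv {ι' : Type*} [Fintype ι'] [DecidableEq ι'] (e : ι' ≃ ι)
    (M : Matrix ι ι (Polynomial R)) : Matrix.trace (M.submatrix e e) = Matrix.trace M := by
  simp only [Matrix.trace, Matrix.diag, Matrix.submatrix_apply]
  exact Fintype.sum_equiv e _ _ fun i => rfl

lemma pen_submatrix {ι' : Type*} [Fintype ι'] [DecidableEq ι'] (e : ι' ≃ ι)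
    (A : Matrix ι ι R) : pen (A.submatrix e e) = (pen A).submatrix e e := by
  refine Matrix.ext fun i j => ?_
  simp [pen, Matrix.submatrix_apply]

lemma deltaFun_reindex {ι' : Type*} [Fintype ι'] [DecidableEq ι'] (e : ι' ≃ ι)
    (A B : Matrix ι ι R) :
    deltaFun (A.submatrix e e) (B.submatrix e e) = deltaFun A B := by
  rw [deltaFun, deltaFun, pen_submatrix, pen_submatrix,
    Matrix.adjugate_submatrix_equiv_self, Matrix.submatrix_mul_equiv, trace_submatrix_equiv]

lemma adjugate_eq_of {S : Type*} [CommRing S] [IsDomain S] (M B : Matrix ι ι S)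
    (hdet : M.det ≠ 0) (h : M * B = M.det • 1) : adjugate M = B := by
  have h2 : M.det • B = M.det • adjugate M := by
    calc M.det • B = (M.det • (1 : Matrix ι ι S)) * B := by rw [Matrix.smul_mul, Matrix.one_mul]
      _ = (adjugate M * M) * B := by rw [Matrix.adjugate_mul]
      _ = adjugate M * (M * B) := by rw [Matrix.mul_assoc]
      _ = adjugate M * (M.det • 1) := by rw [h]
      _ = M.det • adjugate M := by rw [Matrix.mul_smul, Matrix.mul_one]
  refine Matrix.ext fun i j => ?_
  have h3 := congrArg (fun X => X i j) h2
  simp only [Matrix.smul_apply, smul_eq_mul] at h3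
  exact (mul_left_cancel₀ hdet h3).symm

lemma L_map {S : Type*} [CommRing S] (χ : R →+* S) (M W : Matrix ι ι R) :
    (W * M + M * Wᵀ).map χ = (W.map χ) * (M.map χ) + (M.map χ) * (W.map χ)ᵀ := by
  refine Matrix.ext fun i j => ?_
  simp [Matrix.map_apply, Matrix.add_apply, Matrix.mul_apply, map_sum, _root_.map_mul,
    Matrix.transpose_apply]

lemma map_C_eval (W : Matrix ι ι R) (t : R) :
    (W.map (Polynomial.C : R → Polynomial R)).map (Polynomial.evalRingHom t) = W := by
  rw [Matrix.map_map]
  refine Matrix.ext fun i j => ?_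
  simp [Matrix.map_apply]

section Field

variable {F : Type*} [Field F]

/-- `deltaFun` as a linear map in its second argument. -/
def deltaLin (A : Matrix ι ι F) : Matrix ι ι F →ₗ[F] Polynomial F where
  toFun B := deltaFun A B
  map_add' B B' := by
    simp only [deltaFun, pen_add, Matrix.mul_add, Matrix.trace_add]
  map_smul' c B := by
    simp only [deltaFun, pen_smul, RingHom.id_apply]
    rw [Matrix.mul_smul, Matrix.trace_smul, smul_eq_mul, ← Polynomial.smul_eq_C_mul]

lemma deltaLin_apply (A B : Matrix ι ι F) : deltaLin A B = deltaFun A B := rfl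

/-- Core dimension inequality. -/
lemma main_ineq {m : ℕ} (A : Matrix (Fin m) (Fin m) F) :
    Module.finrank F (LinearMap.range (congrTangentMap A))
      + Module.finrank F (LinearMap.range (deltaLin A)) ≤ m * m + 1 := by
  classical
  set δ := deltaLin (F := F) A with hδdef
  set p₀ : Polynomial F := (pen A).det with hp₀
  set V : Submodule F (Matrix (Fin m) (Fin m) F) := Submodule.comap δ (Submodule.span F {p₀})
    with hV
  have hLV : LinearMap.range (congrTangentMap A) ≤ V := by
    rintro x ⟨U, rfl⟩
    have hkey : δ (congrTangentMap A U) = (2 * Matrix.trace U) • p₀ := by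
      show deltaFun A (U * A + A * Uᵀ) = _
      rw [deltaFun_key, Polynomial.smul_eq_C_mul]
    refine Submodule.mem_comap.mpr ?_
    rw [hkey]
    exact Submodule.smul_mem _ _ (Submodule.mem_span_singleton_self p₀)
  have h1 : Module.finrank F (LinearMap.range (congrTangentMap A)) ≤ Module.finrank F V :=
    Submodule.finrank_mono hLV
  have h2 := LinearMap.finrank_range_add_finrank_ker (δ.domRestrict V)
  have h3 : Module.finrank F (LinearMap.range (δ.domRestrict V)) ≤ 1 := by
    have hsub : LinearMap.range (δ.domRestrict V) ≤ Submodule.span F {p₀} := by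
      rintro x ⟨⟨y, hy⟩, rfl⟩
      exact hy
    refine le_trans (Submodule.finrank_mono hsub) ?_
    by_cases hp : p₀ = 0
    · rw [hp, Submodule.span_zero_singleton]
      simp
    · rw [finrank_span_singleton hp]
  have h4 : Module.finrank F (LinearMap.ker (δ.domRestrict V))
      ≤ Module.finrank F (LinearMap.ker δ) := by
    have hmap : (LinearMap.ker (δ.domRestrict V)).map V.subtype ≤ LinearMap.ker δ := by
      rintro x ⟨⟨y, hyV⟩, hk, rfl⟩
      simpa [LinearMap.mem_ker] using hk
    have heq : Module.finrank F (LinearMap.ker (δ.domRestrict V))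
        = Module.finrank F ((LinearMap.ker (δ.domRestrict V)).map V.subtype) :=
      (Submodule.equivMapOfInjective _ (Submodule.injective_subtype V) _).finrank_eq
    rw [heq]
    exact Submodule.finrank_mono hmap
  have h5 := LinearMap.finrank_range_add_finrank_ker δ
  have h6 : Module.finrank F (Matrix (Fin m) (Fin m) F) = m * m := by
    rw [Module.finrank_matrix]
    simp
  rw [h6] at h5
  omega

/-- From an independent family of images, a lower bound on the rank. -/
lemma card_le_finrank_range {M N : Type*} [AddCommGroup M] [Module F M] [AddCommGroup N]
    [Module F N] [FiniteDimensional F M] (f : M →ₗ[F] N) {s : ℕ} (w : Fin s → M)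
    (h : LinearIndependent F fun j => f (w j)) :
    s ≤ Module.finrank F (LinearMap.range f) := by
  have h' : LinearIndependent F fun j => (⟨f (w j), LinearMap.mem_range_self f (w j)⟩ :
      LinearMap.range f) := by
    refine LinearIndependent.of_comp (LinearMap.range f).subtype ?_
    convert h
    rfl
  simpa using h'.fintype_card_le_finrank

/-- A full independent family for the range. -/
lemma exists_indep_family {M N : Type*} [AddCommGroup M] [Module F M] [AddCommGroup N]
    [Module F N] [FiniteDimensional F M] (f : M →ₗ[F] N) :
    ∃ w : Fin (Module.finrank F (LinearMap.range f)) → M,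
      LinearIndependent F fun j => f (w j) := by
  let b := Module.finBasis F (LinearMap.range f)
  have hmem : ∀ j, (b j : N) ∈ LinearMap.range f := fun j => (b j).2
  choose w hw using fun j => hmem j
  refine ⟨w, ?_⟩
  have : (fun j => f (w j)) = fun j => ((LinearMap.range f).subtype (b j)) := by
    funext j; simp [hw j]
  rw [this]
  exact b.linearIndependent.map' _ (Submodule.ker_subtype _)

/-- Matrices to entry functions, as a linear map. -/
def entriesMap (F : Type*) [Field F] (ι : Type*) : Matrix ι ι F →ₗ[F] (ι × ι → F) where
  toFun M := fun p => M p.1 p.2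
  map_add' M N := rfl
  map_smul' c M := rfl

lemma entriesMap_ker (F : Type*) [Field F] (ι : Type*) :
    LinearMap.ker (entriesMap F ι) = ⊥ := by
  rw [LinearMap.ker_eq_bot]
  intro M N h
  refine Matrix.ext fun i j => ?_
  exact congrFun h (i, j)

/-- Polynomials to coefficient functions, as a linear map. -/
def coeffsMap (F : Type*) [Field F] : Polynomial F →ₗ[F] (ℕ → F) :=
  LinearMap.pi fun d => Polynomial.lcoeff F d

lemma coeffsMap_apply (F : Type*) [Field F] (p : Polynomial F) (d : ℕ) :
    coeffsMap F p d = p.coeff d := rfl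

lemma coeffsMap_ker (F : Type*) [Field F] : LinearMap.ker (coeffsMap F) = ⊥ := by
  rw [LinearMap.ker_eq_bot]
  intro p q h
  exact Polynomial.ext fun d => congrFun h d

end Field

end

section IndepUp

variable {k : Type*} [Field k]

lemma indep_aux {κ : Type*} {s : ℕ} (t : k) (v : Fin s → κ → Polynomial k)
    (hind : LinearIndependent k fun j => fun x => (v j x).eval t) :
    ∀ p : Fin s → Polynomial k, (∑ j, p j • v j) = 0 → p = 0 := by
  suffices H : ∀ N (p : Fin s → Polynomial k), (∑ j, (p j).natDegree) = N →
      (∑ j, p j • v j) = 0 → p = 0 by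
    exact fun p hp => H _ p rfl hp
  intro N
  induction N using Nat.strong_induction_on with
  | _ N ih =>
    intro p hN hsum
    by_cases hp0 : p = 0
    · exact hp0
    exfalso
    have hcomp : ∀ x : κ, (∑ j, p j * v j x) = 0 := by
      intro x
      have := congrFun hsum x
      simpa [Finset.sum_apply, smul_eq_mul] using this
    have hroot : ∀ j, (p j).eval t = 0 := by
      have h1 : (∑ j, ((p j).eval t) • (fun x => (v j x).eval t)) = (0 : κ → k) := by
        funext x
        simp only [Finset.sum_apply, Pi.smul_apply, smul_eq_mul, Pi.zero_apply]
        have : ((∑ j, p j * v j x)).eval t = 0 := by rw [hcomp x]; simp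
        rw [Polynomial.eval_finset_sum] at this
        simpa [Polynomial.eval_mul] using this
      exact fun j => (Fintype.linearIndependent_iff.mp hind) _ h1 j
    choose q hq using fun j => Polynomial.dvd_iff_isRoot.mpr (hroot j)
    have hqsum : (∑ j, q j • v j) = 0 := by
      have hfac : (X - C t) • (∑ j, q j • v j) = (0 : κ → Polynomial k) := by
        rw [Finset.smul_sum]
        calc (∑ j, (X - C t) • (q j • v j)) = ∑ j, p j • v j := by
              refine Finset.sum_congr rfl fun j _ => ?_
              rw [smul_smul, ← hq j]
          _ = 0 := hsum
      funext x
      have := congrFun hfac x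
      simp only [Pi.smul_apply, smul_eq_mul, Pi.zero_apply] at this ⊢
      rcases mul_eq_zero.mp this with h | h
      · exact absurd h (Polynomial.X_sub_C_ne_zero t)
      · exact h
    obtain ⟨j₀, hj₀⟩ : ∃ j, p j ≠ 0 := by
      by_contra h
      push_neg at h
      exact hp0 (funext h)
    have hqj₀ : q j₀ ≠ 0 := fun h => hj₀ (by rw [hq j₀, h, mul_zero])
    have hdeg : ∀ j, (q j).natDegree ≤ (p j).natDegree := by
      intro j
      by_cases hqj : q j = 0
      · simp [hqj]
      · rw [hq j, Polynomial.natDegree_mul (Polynomial.X_sub_C_ne_zero t) hqj,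
          Polynomial.natDegree_X_sub_C]
        omega
    have hdeglt : (∑ j, (q j).natDegree) < N := by
      rw [← hN]
      refine Finset.sum_lt_sum (fun j _ => hdeg j) ⟨j₀, Finset.mem_univ _, ?_⟩
      rw [hq j₀, Polynomial.natDegree_mul (Polynomial.X_sub_C_ne_zero t) hqj₀,
        Polynomial.natDegree_X_sub_C]
      omega
    have hq0 := ih _ hdeglt q rfl hqsum
    apply hj₀
    rw [hq j₀, hq0]
    simp

lemma indep_up {κ : Type*} {s : ℕ} (t : k) (v : Fin s → κ → Polynomial k)
    (hind : LinearIndependent k fun j => fun x => (v j x).eval t) :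
    LinearIndependent (FractionRing (Polynomial k))
      fun j => fun x => algebraMap (Polynomial k) (FractionRing (Polynomial k)) (v j x) := by
  set K := FractionRing (Polynomial k)
  rw [Fintype.linearIndependent_iff]
  intro c hc
  obtain ⟨b, hb⟩ := IsLocalization.exist_integer_multiples_of_finite
    (nonZeroDivisors (Polynomial k)) c
  choose p hp using hb
  have hsum0 : (∑ j, p j • v j) = 0 := by
    funext x
    show (∑ j, p j • v j) x = 0
    have hinj := IsFractionRing.injective (Polynomial k) K
    apply hinj
    rw [map_zero]
    have hl : algebraMap (Polynomial k) K ((∑ j, p j • v j) x) =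
        ∑ j, algebraMap (Polynomial k) K (p j) * algebraMap (Polynomial k) K (v j x) := by
      simp [Finset.sum_apply, smul_eq_mul, map_sum]
    rw [hl]
    have hpj : ∀ j, algebraMap (Polynomial k) K (p j) = (b : Polynomial k) • c j := fun j => hp j
    calc (∑ j, algebraMap (Polynomial k) K (p j) * algebraMap (Polynomial k) K (v j x))
        = (b : Polynomial k) • ∑ j, c j * algebraMap (Polynomial k) K (v j x) := by
          rw [Finset.smul_sum]
          refine Finset.sum_congr rfl fun j _ => ?_
          rw [hpj j, smul_mul_assoc]
      _ = (b : Polynomial k) • ((∑ j, c j • fun x => algebraMap (Polynomial k) K (v j x)) x) := by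
          simp [Finset.sum_apply, smul_eq_mul]
      _ = 0 := by rw [hc]; simp
  have hp0 := indep_aux t v hind p hsum0
  intro i
  have hzero : (b : Polynomial k) • c i = 0 := by
    rw [← hp i, hp0]
    simp
  have hbne : algebraMap (Polynomial k) (FractionRing (Polynomial k)) (b : Polynomial k) ≠ 0 := by
    have : (b : Polynomial k) ≠ 0 := nonZeroDivisors.ne_zero b.2
    simpa [map_eq_zero_iff _ (IsFractionRing.injective (Polynomial k)
      (FractionRing (Polynomial k)))] using this
  rw [Algebra.smul_def] at hzero
  rcases mul_eq_zero.mp hzero with h | h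
  · exact absurd h hbne
  · exact h

end IndepUp

noncomputable section CertificateSection

section Certificate

variable (F : Type*) [Field F] [CharZero F]

def mu (n : ℕ) (j : Fin n) : F := (((j : ℕ) + 2 : ℕ) : F)

def Dblk (n : ℕ) (j : Fin n) : Matrix (Fin 2) (Fin 2) F := !![0, 1; mu F n j, 0]

def dpoly (n : ℕ) (j : Fin n) : Polynomial F :=
  -((X + C (mu F n j)) * (C (mu F n j) * X + 1))

def Rpoly (n : ℕ) (j : Fin n) : Polynomial F := ∏ i ∈ Finset.univ.erase j, dpoly F n i

lemma pen_Dblk (n : ℕ) (j : Fin n) :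
    pen (Dblk F n j) = !![0, X + C (mu F n j); C (mu F n j) * X + 1, 0] := by
  refine Matrix.ext fun i j' => ?_
  fin_cases i <;> fin_cases j' <;> simp [pen, Dblk]

lemma det_pen_Dblk (n : ℕ) (j : Fin n) : (pen (Dblk F n j)).det = dpoly F n j := by
  rw [pen_Dblk, Matrix.det_fin_two_of, dpoly]; ring

lemma CmuX_ne (n : ℕ) (j : Fin n) : (C (mu F n j) * X + 1 : Polynomial F) ≠ 0 := by
  intro h
  have h0 := congrArg (fun p => Polynomial.coeff p 0) h
  simp at h0

lemma dpoly_ne_zero (n : ℕ) (j : Fin n) : dpoly F n j ≠ 0 := by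
  rw [dpoly]
  exact neg_ne_zero.mpr (mul_ne_zero (Polynomial.X_add_C_ne_zero _) (CmuX_ne F n j))

lemma Rpoly_ne_zero (n : ℕ) (j : Fin n) : Rpoly F n j ≠ 0 :=
  Finset.prod_ne_zero_iff.mpr fun i _ => dpoly_ne_zero F n i

lemma pen_blockDiagonal {n : ℕ} (M : Fin n → Matrix (Fin 2) (Fin 2) F) :
    pen (blockDiagonal M) = blockDiagonal fun j => pen (M j) := by
  refine Matrix.ext fun i j => ?_
  rcases i with ⟨i1, i2⟩; rcases j with ⟨j1, j2⟩
  by_cases h : i2 = j2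
  · subst h; simp [pen, Matrix.blockDiagonal_apply]
  · simp [pen, Matrix.blockDiagonal_apply, h, Ne.symm h]

def adjblkfam (n : ℕ) : Fin n → Matrix (Fin 2) (Fin 2) (Polynomial F) :=
  fun j => Rpoly F n j • adjugate (pen (Dblk F n j))

lemma det_pen_blk (n : ℕ) : (pen (blockDiagonal (Dblk F n))).det = ∏ j, dpoly F n j := by
  rw [pen_blockDiagonal, Matrix.det_blockDiagonal]
  exact Finset.prod_congr rfl fun j _ => det_pen_Dblk F n j

lemma adj_pen_blk (n : ℕ) :
    adjugate (pen (blockDiagonal (Dblk F n))) = blockDiagonal (adjblkfam F n) := by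
  apply adjugate_eq_of
  · rw [det_pen_blk]
    exact Finset.prod_ne_zero_iff.mpr fun j _ => dpoly_ne_zero F n j
  · rw [det_pen_blk, pen_blockDiagonal, ← Matrix.blockDiagonal_mul]
    have hblk : ∀ j, pen (Dblk F n j) * adjblkfam F n j
        = (∏ i, dpoly F n i) • (1 : Matrix (Fin 2) (Fin 2) (Polynomial F)) := by
      intro j
      rw [adjblkfam, Matrix.mul_smul, Matrix.mul_adjugate, det_pen_Dblk, smul_smul, Rpoly,
        Finset.prod_erase_mul _ _ (Finset.mem_univ j)]
    have hbd : (fun j => pen (Dblk F n j) * adjblkfam F n j)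
        = fun _ : Fin n => ((∏ i, dpoly F n i) • 1 : Matrix (Fin 2) (Fin 2) (Polynomial F)) :=
      funext hblk
    rw [hbd]
    rw [show (fun _ : Fin n => ((∏ i, dpoly F n i) • 1 : Matrix (Fin 2) (Fin 2) (Polynomial F)))
      = ((∏ i, dpoly F n i) • fun _ => (1 : Matrix (Fin 2) (Fin 2) (Polynomial F))) from rfl]
    rw [Matrix.blockDiagonal_smul]
    rw [show (fun _ : Fin n => (1 : Matrix (Fin 2) (Fin 2) (Polynomial F)))
      = (1 : Fin n → Matrix (Fin 2) (Fin 2) (Polynomial F)) from rfl, Matrix.blockDiagonal_one]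

def certA (n r : ℕ) : Matrix ((Fin 2 × Fin n) ⊕ Fin r) ((Fin 2 × Fin n) ⊕ Fin r) F :=
  fromBlocks (blockDiagonal (Dblk F n)) 0 0 1

lemma pen_fromBlocks {a b : Type*} [Fintype a] [DecidableEq a] [Fintype b] [DecidableEq b]
    (P : Matrix a a F) (Q : Matrix b b F) :
    pen (fromBlocks P 0 0 Q) = fromBlocks (pen P) 0 0 (pen Q) := by
  refine Matrix.ext fun i j => ?_
  rcases i with i | i <;> rcases j with j | j <;>
    simp [pen, Matrix.fromBlocks]

lemma pen_one {σ : Type*} [Fintype σ] [DecidableEq σ] :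
    pen (1 : Matrix σ σ F) = (X + 1 : Polynomial F) • (1 : Matrix σ σ (Polynomial F)) := by
  refine Matrix.ext fun i j => ?_
  by_cases h : i = j
  · subst h; simp [pen, Matrix.one_apply, smul_eq_mul]
  · simp [pen, Matrix.one_apply, h, Ne.symm h, smul_eq_mul]

lemma Xp1_pow_ne_zero (r : ℕ) : ((X + 1 : Polynomial F))^r ≠ 0 := by
  apply pow_ne_zero
  have h1 : (X + 1 : Polynomial F) = X + C 1 := by simp
  rw [h1]
  exact Polynomial.X_add_C_ne_zero 1

lemma det_pen_certA (n r : ℕ) :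
    (pen (certA F n r)).det = (∏ j, dpoly F n j) * (X+1)^r := by
  rw [certA, pen_fromBlocks, Matrix.det_fromBlocks_zero₂₁, det_pen_blk, pen_one, Matrix.det_smul,
    Matrix.det_one, mul_one]
  simp

lemma det_pen_certA_ne_zero (n r : ℕ) : (pen (certA F n r)).det ≠ 0 := by
  rw [det_pen_certA]
  exact mul_ne_zero (Finset.prod_ne_zero_iff.mpr fun j _ => dpoly_ne_zero F n j)
    (Xp1_pow_ne_zero F r)

lemma adj_pen_certA (n r : ℕ) (hr : r ≤ 1) :
    adjugate (pen (certA F n r)) =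
      fromBlocks (((X+1 : Polynomial F))^r • blockDiagonal (adjblkfam F n)) 0 0
        ((∏ j, dpoly F n j) • 1) := by
  apply adjugate_eq_of
  · exact det_pen_certA_ne_zero F n r
  · rw [certA, pen_fromBlocks, Matrix.fromBlocks_multiply]
    simp only [Matrix.mul_zero, Matrix.zero_mul, add_zero, zero_add]
    have hTL : pen (blockDiagonal (Dblk F n))
          * (((X+1 : Polynomial F))^r • blockDiagonal (adjblkfam F n))
        = ((∏ j, dpoly F n j) * (X+1)^r) • 1 := by
      rw [Matrix.mul_smul, ← adj_pen_blk, Matrix.mul_adjugate, det_pen_blk, smul_smul, mul_comm]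
    have hBR : pen (1 : Matrix (Fin r) (Fin r) F) * ((∏ j, dpoly F n j) • 1)
        = ((∏ j, dpoly F n j) * (X+1)^r) • (1 : Matrix (Fin r) (Fin r) (Polynomial F)) := by
      interval_cases r
      · refine Matrix.ext fun i _ => i.elim0
      · rw [pen_one, Matrix.smul_mul, Matrix.one_mul, smul_smul, pow_one,
          mul_comm (X + 1 : Polynomial F) _]
    have hdet : (fromBlocks (pen (blockDiagonal (Dblk F n))) 0 0
        (pen (1 : Matrix (Fin r) (Fin r) F))).det = (∏ j, dpoly F n j) * (X+1)^r := by
      rw [← pen_fromBlocks]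
      exact det_pen_certA F n r
    rw [hTL, hBR, hdet]
    rw [show (0 : Matrix (Fin 2 × Fin n) (Fin r) (Polynomial F))
      = ((∏ j, dpoly F n j) * (X+1)^r) • 0 from (smul_zero _).symm]
    rw [show (0 : Matrix (Fin r) (Fin 2 × Fin n) (Polynomial F))
      = ((∏ j, dpoly F n j) * (X+1)^r) • 0 from (smul_zero _).symm]
    rw [← Matrix.fromBlocks_smul, Matrix.fromBlocks_one]

def csing (n r : ℕ) (j₀ : Fin n) (g : Matrix (Fin 2) (Fin 2) F) :
    Matrix ((Fin 2 × Fin n) ⊕ Fin r) ((Fin 2 × Fin n) ⊕ Fin r) F :=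
  fromBlocks (blockDiagonal fun i => if i = j₀ then g else 0) 0 0 0

lemma trace_fromBlocks {a b : Type*} [Fintype a] [Fintype b] {α : Type*} [AddCommMonoid α]
    (A : Matrix a a α) (B : Matrix a b α) (C' : Matrix b a α) (D : Matrix b b α) :
    Matrix.trace (fromBlocks A B C' D) = Matrix.trace A + Matrix.trace D := by
  simp [Matrix.trace, Matrix.diag, Fintype.sum_sum_type, Matrix.fromBlocks]

lemma delta_cert_single (n r : ℕ) (hr : r ≤ 1) (j₀ : Fin n) (g : Matrix (Fin 2) (Fin 2) F) :
    deltaFun (certA F n r) (csing F n r j₀ g)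
      = (X+1)^r * (Rpoly F n j₀ * Matrix.trace (adjugate (pen (Dblk F n j₀)) * pen g)) := by
  rw [deltaFun, adj_pen_certA F n r hr, csing, pen_fromBlocks, pen_zero,
    Matrix.fromBlocks_multiply]
  simp only [Matrix.mul_zero, Matrix.zero_mul, add_zero, zero_add]
  rw [trace_fromBlocks, Matrix.trace_zero, add_zero]
  rw [Matrix.smul_mul, Matrix.trace_smul]
  rw [pen_blockDiagonal, ← Matrix.blockDiagonal_mul, Matrix.trace_blockDiagonal]
  rw [Finset.sum_eq_single j₀ (fun i _ hne => by
      rw [if_neg hne, pen_zero, Matrix.mul_zero, Matrix.trace_zero])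
    (fun h => absurd (Finset.mem_univ _) h)]
  rw [if_pos rfl, adjblkfam, Matrix.smul_mul, Matrix.trace_smul, smul_eq_mul, smul_eq_mul]

lemma tval1 (n : ℕ) (j : Fin n) :
    Matrix.trace (adjugate (pen (Dblk F n j)) * pen (!![0, 1; -(mu F n j), 0]))
      = 2 * ((C (mu F n j))^2 - 1) * X := by
  rw [pen_Dblk, Matrix.adjugate_fin_two_of]
  have hp : pen (!![0, (1:F); -(mu F n j), 0])
      = !![0, X - C (mu F n j); C (-(mu F n j)) * X + 1, 0] := by
    refine Matrix.ext fun i j' => ?_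
    fin_cases i <;> fin_cases j' <;> simp [pen] <;> ring
  rw [hp, Matrix.mul_fin_two, Matrix.trace_fin_two_of, map_neg]
  ring

lemma tval2 (n : ℕ) [NeZero n] :
    Matrix.trace (adjugate (pen (Dblk F n 0)) * pen (!![0, mu F n 0; -1, 0]))
      = (1 - (C (mu F n 0))^2) * (X^2 + 1) := by
  rw [pen_Dblk, Matrix.adjugate_fin_two_of]
  have hp : pen (!![0, mu F n 0; (-1 : F), 0])
      = !![0, X * C (mu F n 0) - 1; C (-1 : F) * X + C (mu F n 0), 0] := by
    refine Matrix.ext fun i j' => ?_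
    fin_cases i <;> fin_cases j' <;> simp [pen] <;> ring
  rw [hp, Matrix.mul_fin_two, Matrix.trace_fin_two_of, Polynomial.C_neg, Polynomial.C_1]
  ring

def csfam (n r : ℕ) [NeZero n] :
    Fin (n+1) → Matrix ((Fin 2 × Fin n) ⊕ Fin r) ((Fin 2 × Fin n) ⊕ Fin r) F :=
  Fin.snoc (fun l => csing F n r l !![0, 1; -(mu F n l), 0]) (csing F n r 0 !![0, mu F n 0; -1, 0])

def wfam (n r : ℕ) [NeZero n] : Fin (n+1) → Polynomial F :=
  Fin.snoc (fun l => (X+1)^r * (Rpoly F n l * (2 * ((C (mu F n l))^2 - 1) * X)))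
           ((X+1)^r * (Rpoly F n 0 * ((1 - (C (mu F n 0))^2) * (X^2+1))))

lemma delta_csfam (n r : ℕ) [NeZero n] (hr : r ≤ 1) (l : Fin (n+1)) :
    deltaFun (certA F n r) (csfam F n r l) = wfam F n r l := by
  induction l using Fin.lastCases with
  | last =>
      rw [csfam, wfam, Fin.snoc_last, Fin.snoc_last, delta_cert_single F n r hr, tval2]
  | cast i =>
      rw [csfam, wfam, Fin.snoc_castSucc, Fin.snoc_castSucc, delta_cert_single F n r hr, tval1]

lemma mu_ne (n : ℕ) {l j : Fin n} (h : l ≠ j) : mu F n l ≠ mu F n j := by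
  intro hc
  apply h
  have h2 : ((l:ℕ) + 2 : ℕ) = ((j:ℕ) + 2 : ℕ) := Nat.cast_injective hc
  exact Fin.ext (by omega)

lemma eval_dpoly (n : ℕ) (l j : Fin n) :
    (dpoly F n l).eval (-(mu F n j)) = -((mu F n l - mu F n j) * (1 - mu F n l * mu F n j)) := by
  simp [dpoly]
  ring

lemma mumul_ne_one (n : ℕ) (l j : Fin n) : mu F n l * mu F n j ≠ 1 := by
  have hc : mu F n l * mu F n j = ((((l:ℕ)+2) * ((j:ℕ)+2) : ℕ) : F) := by
    rw [mu, mu]; push_cast; ring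
  rw [hc]
  intro h
  have h2 : ((((l:ℕ)+2) * ((j:ℕ)+2) : ℕ) : F) = ((1:ℕ) : F) := by simpa using h
  have h3 := Nat.cast_injective h2
  have h4 : 2 * 2 ≤ ((l:ℕ)+2) * ((j:ℕ)+2) := Nat.mul_le_mul (by omega) (by omega)
  rw [h3] at h4
  omega

lemma eval_dpoly_ne (n : ℕ) {l j : Fin n} (h : l ≠ j) :
    (dpoly F n l).eval (-(mu F n j)) ≠ 0 := by
  rw [eval_dpoly]
  exact neg_ne_zero.mpr (mul_ne_zero (sub_ne_zero.mpr (mu_ne F n h))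
    (sub_ne_zero.mpr fun hc => (mumul_ne_one F n l j) hc.symm))

lemma eval_dpoly_self (n : ℕ) (j : Fin n) : (dpoly F n j).eval (-(mu F n j)) = 0 := by
  rw [eval_dpoly]; ring

lemma eval_Rpoly_ne (n : ℕ) (j : Fin n) : (Rpoly F n j).eval (-(mu F n j)) ≠ 0 := by
  rw [Rpoly, Polynomial.eval_prod]
  exact Finset.prod_ne_zero_iff.mpr fun l hl =>
    eval_dpoly_ne F n (Finset.ne_of_mem_erase hl)

lemma eval_Rpoly_zero (n : ℕ) {i j : Fin n} (h : i ≠ j) :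
    (Rpoly F n i).eval (-(mu F n j)) = 0 := by
  rw [Rpoly, Polynomial.eval_prod]
  exact Finset.prod_eq_zero (Finset.mem_erase.mpr ⟨Ne.symm h, Finset.mem_univ _⟩)
    (eval_dpoly_self F n j)

lemma eval_Xp1_ne (n r : ℕ) (j : Fin n) : (((X+1) : Polynomial F)^r).eval (-(mu F n j)) ≠ 0 := by
  rw [Polynomial.eval_pow]
  refine pow_ne_zero _ ?_
  simp only [Polynomial.eval_add, Polynomial.eval_X, Polynomial.eval_one]
  intro hc
  have h2 : mu F n j = 1 := by linear_combination -hc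
  rw [mu] at h2
  have h3 : (((j:ℕ)+2 : ℕ) : F) = ((1:ℕ) : F) := by simpa using h2
  have h4 := Nat.cast_injective h3
  omega

lemma mu_sq_ne_one (n : ℕ) (j : Fin n) : (mu F n j)^2 ≠ 1 := by
  have hc : (mu F n j)^2 = ((((j:ℕ)+2)^2 : ℕ) : F) := by rw [mu]; push_cast; ring
  rw [hc]
  intro h
  have h2 : ((((j:ℕ)+2)^2 : ℕ) : F) = ((1:ℕ) : F) := by simpa using h
  have h3 := Nat.cast_injective h2
  have h4 : 2*2 ≤ ((j:ℕ)+2)*((j:ℕ)+2) := Nat.mul_le_mul (by omega) (by omega)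
  have h5 : ((j:ℕ)+2)*((j:ℕ)+2) = 1 := by rw [← h3]; ring
  rw [h5] at h4
  omega

lemma mu_ne_zero (n : ℕ) (j : Fin n) : mu F n j ≠ 0 := by
  rw [mu]
  intro h
  have h2 : (((j:ℕ)+2 : ℕ) : F) = ((0:ℕ) : F) := by simpa using h
  have h3 := Nat.cast_injective h2
  omega

lemma wfam_indep (n r : ℕ) [NeZero n] (hr : r ≤ 1) : LinearIndependent F (wfam F n r) := by
  rw [Fintype.linearIndependent_iff]
  intro a ha
  have hstep1 : ∀ j : Fin n, j ≠ 0 → a j.castSucc = 0 := by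
    intro j hj
    have hev := congrArg (Polynomial.eval (-(mu F n j))) ha
    rw [Polynomial.eval_finset_sum] at hev
    simp only [Polynomial.eval_smul, smul_eq_mul, Polynomial.eval_zero] at hev
    rw [Fin.sum_univ_castSucc] at hev
    simp only [wfam, Fin.snoc_castSucc, Fin.snoc_last] at hev
    have hterm : ∀ i : Fin n, i ≠ j →
        (((X+1:Polynomial F))^r * (Rpoly F n i * (2 * ((C (mu F n i))^2 - 1) * X))).eval
          (-(mu F n j)) = 0 := by
      intro i hij
      rw [Polynomial.eval_mul, Polynomial.eval_mul, eval_Rpoly_zero F n hij]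
      ring
    have hlast : (((X+1:Polynomial F))^r * (Rpoly F n 0 * ((1 - (C (mu F n 0))^2) * (X^2+1)))).eval
        (-(mu F n j)) = 0 := by
      rw [Polynomial.eval_mul, Polynomial.eval_mul, eval_Rpoly_zero F n (Ne.symm hj)]
      ring
    rw [hlast, mul_zero, add_zero] at hev
    rw [Finset.sum_eq_single j (fun i _ hij => by rw [hterm i hij, mul_zero])
      (fun h => absurd (Finset.mem_univ _) h)] at hev
    have hwj : (((X+1:Polynomial F))^r * (Rpoly F n j * (2 * ((C (mu F n j))^2 - 1) * X))).eval
        (-(mu F n j)) ≠ 0 := by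
      rw [Polynomial.eval_mul, Polynomial.eval_mul]
      refine mul_ne_zero (eval_Xp1_ne F n r j) (mul_ne_zero (eval_Rpoly_ne F n j) ?_)
      simp only [Polynomial.eval_mul, Polynomial.eval_sub, Polynomial.eval_pow,
        Polynomial.eval_C, Polynomial.eval_one, Polynomial.eval_X, Polynomial.eval_ofNat]
      refine mul_ne_zero (mul_ne_zero two_ne_zero ?_) (neg_ne_zero.mpr (mu_ne_zero F n j))
      exact sub_ne_zero.mpr (mu_sq_ne_one F n j)
    exact (mul_eq_zero.mp hev).resolve_right hwj
  have hred : a (Fin.castSucc 0) • wfam F n r (Fin.castSucc 0)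
      + a (Fin.last n) • wfam F n r (Fin.last n) = 0 := by
    rw [Fin.sum_univ_castSucc] at ha
    rwa [Finset.sum_eq_single (0 : Fin n) (fun i _ hi => by rw [hstep1 i hi, zero_smul])
      (fun h => absurd (Finset.mem_univ _) h)] at ha
  simp only [wfam, Fin.snoc_castSucc, Fin.snoc_last] at hred
  have hfac : (((X+1:Polynomial F))^r * Rpoly F n 0) *
      (C (a (Fin.castSucc 0)) * (2 * ((C (mu F n 0))^2 - 1) * X)
        + C (a (Fin.last n)) * ((1 - (C (mu F n 0))^2) * (X^2+1))) = 0 := by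
    rw [Polynomial.smul_eq_C_mul, Polynomial.smul_eq_C_mul] at hred
    linear_combination hred
  have hbr : (C (a (Fin.castSucc 0)) * (2 * ((C (mu F n 0))^2 - 1) * X)
        + C (a (Fin.last n)) * ((1 - (C (mu F n 0))^2) * (X^2+1))) = 0 :=
    (mul_eq_zero.mp hfac).resolve_left
      (mul_ne_zero (Xp1_pow_ne_zero F r) (Rpoly_ne_zero F n 0))
  have halast : a (Fin.last n) = 0 := by
    have h0 := congrArg (Polynomial.eval 0) hbr
    simp only [Polynomial.eval_add, Polynomial.eval_mul, Polynomial.eval_C, Polynomial.eval_X,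
      Polynomial.eval_sub, Polynomial.eval_pow, Polynomial.eval_one, Polynomial.eval_zero,
      Polynomial.eval_ofNat] at h0
    have h1 : a (Fin.last n) * (1 - (mu F n 0)^2) = 0 := by linear_combination h0
    have h2 : (1 - (mu F n 0)^2) ≠ 0 := sub_ne_zero.mpr fun hc => (mu_sq_ne_one F n 0) hc.symm
    exact (mul_eq_zero.mp h1).resolve_right h2
  have ha0 : a (Fin.castSucc 0) = 0 := by
    have h1 := congrArg (Polynomial.eval 1) hbr
    simp only [Polynomial.eval_add, Polynomial.eval_mul, Polynomial.eval_C, Polynomial.eval_X,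
      Polynomial.eval_sub, Polynomial.eval_pow, Polynomial.eval_one, Polynomial.eval_zero,
      Polynomial.eval_ofNat, halast, zero_mul, add_zero] at h1
    have h2 : ((mu F n 0)^2 - 1) ≠ 0 := sub_ne_zero.mpr (mu_sq_ne_one F n 0)
    have h3 : a (Fin.castSucc 0) * (2 * ((mu F n 0)^2 - 1)) = 0 := by linear_combination h1
    rcases mul_eq_zero.mp h3 with h | h
    · exact h
    · exact absurd ((mul_eq_zero.mp h).resolve_left two_ne_zero) h2
  intro l
  induction l using Fin.lastCases with
  | last => exact halast
  | cast i =>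
      by_cases hi : i = 0
      · subst hi; exact ha0
      · exact hstep1 i hi

end Certificate

lemma cert_fin (F : Type*) [Field F] [CharZero F] (m : ℕ) (hm : 1 ≤ m / 2) :
    ∃ (A₀ : Matrix (Fin m) (Fin m) F) (Cs : Fin (m/2 + 1) → Matrix (Fin m) (Fin m) F),
      LinearIndependent F fun l => deltaFun A₀ (Cs l) := by
  have hmod := Nat.div_add_mod m 2
  set n := m / 2 with hn
  set r := m % 2 with hrdef
  haveI : NeZero n := ⟨by omega⟩
  have hr : r ≤ 1 := by omega
  have hcard : Fintype.card ((Fin 2 × Fin n) ⊕ Fin r) = m := by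
    simp only [Fintype.card_sum, Fintype.card_prod, Fintype.card_fin]
    omega
  let e : ((Fin 2 × Fin n) ⊕ Fin r) ≃ Fin m := Fintype.equivFinOfCardEq hcard
  refine ⟨(certA F n r).submatrix e.symm e.symm,
    fun l => (csfam F n r l).submatrix e.symm e.symm, ?_⟩
  have hrw : (fun l => deltaFun ((certA F n r).submatrix e.symm e.symm)
      ((csfam F n r l).submatrix e.symm e.symm)) = wfam F n r := by
    funext l
    rw [deltaFun_reindex e.symm, delta_csfam F n r hr l]
  rw [hrw]
  exact wfam_indep F n r hr

end CertificateSection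

end CongAux

theorem stmt17 {k : Type*} [Field k] [CharZero k] {m : ℕ}
    (A : Matrix (Fin m) (Fin m) k) :
    m / 2 ≤ Module.finrank k (LinearMap.ker (congrTangentMap A)) := by
  classical
  by_cases hm : m / 2 = 0
  · rw [hm]; exact Nat.zero_le _
  have hm1 : 1 ≤ m / 2 := Nat.pos_of_ne_zero hm
  obtain ⟨A₀, Cs, hcert⟩ := CongAux.cert_fin k m hm1
  set K := FractionRing (Polynomial k) with hK
  let φ : Polynomial k →+* K := algebraMap (Polynomial k) K
  let ψ : k →+* K := φ.comp (Polynomial.C)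
  set Ap : Matrix (Fin m) (Fin m) (Polynomial k) :=
    A₀.map (Polynomial.C : k → Polynomial k)
      + (Polynomial.X : Polynomial k) •
        (A.map (Polynomial.C : k → Polynomial k) - A₀.map (Polynomial.C : k → Polynomial k))
    with hApdef
  have hA0 : Ap.map (Polynomial.evalRingHom (0:k)) = A₀ := by
    refine Matrix.ext fun i j => ?_
    simp [hApdef, Matrix.map_apply, Matrix.add_apply, Matrix.smul_apply, Matrix.sub_apply,
      smul_eq_mul]
  have hA1 : Ap.map (Polynomial.evalRingHom (1:k)) = A := by
    refine Matrix.ext fun i j => ?_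
    simp [hApdef, Matrix.map_apply, Matrix.add_apply, Matrix.smul_apply, Matrix.sub_apply,
      smul_eq_mul]
  set AK : Matrix (Fin m) (Fin m) K := Ap.map φ with hAKdef
  -- step a : transfer the rank of the tangent map at A (specialization at X = 1)
  obtain ⟨U, hU⟩ := CongAux.exists_indep_family (congrTangentMap A)
  set v : Fin (Module.finrank k (LinearMap.range (congrTangentMap A)))
      → (Fin m × Fin m) → Polynomial k := fun j p =>
    ((U j).map (Polynomial.C : k → Polynomial k) * Ap
      + Ap * ((U j).map (Polynomial.C : k → Polynomial k))ᵀ) p.1 p.2 with hvdef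
  have hM1 : ∀ j, ((U j).map (Polynomial.C : k → Polynomial k) * Ap
      + Ap * ((U j).map (Polynomial.C : k → Polynomial k))ᵀ).map (Polynomial.evalRingHom (1:k))
      = congrTangentMap A (U j) := by
    intro j
    rw [CongAux.L_map (Polynomial.evalRingHom (1:k)) Ap ((U j).map (Polynomial.C : k → Polynomial k)),
      CongAux.map_C_eval, hA1]
    rfl
  have hMφ : ∀ j, ((U j).map (Polynomial.C : k → Polynomial k) * Ap
      + Ap * ((U j).map (Polynomial.C : k → Polynomial k))ᵀ).map φ
      = congrTangentMap AK ((U j).map ψ) := by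
    intro j
    rw [CongAux.L_map φ Ap ((U j).map (Polynomial.C : k → Polynomial k)), Matrix.map_map]
    rfl
  have hindk1 : LinearIndependent k fun j => fun x : Fin m × Fin m => (v j x).eval 1 := by
    have h0 : (fun j => fun x : Fin m × Fin m => (v j x).eval 1)
        = fun j => CongAux.entriesMap k (Fin m) (congrTangentMap A (U j)) := by
      funext j x
      have hc := congrArg (fun M => M x.1 x.2) (hM1 j)
      simp only [Matrix.map_apply, Polynomial.coe_evalRingHom] at hc
      show (v j x).eval 1 = (congrTangentMap A (U j)) x.1 x.2
      rw [hvdef]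
      exact hc
    rw [h0]
    exact hU.map' _ (CongAux.entriesMap_ker k (Fin m))
  have hindK1 := CongAux.indep_up 1 v hindk1
  have hindKL : LinearIndependent K fun j => congrTangentMap AK ((U j).map ψ) := by
    refine LinearIndependent.of_comp (CongAux.entriesMap K (Fin m)) ?_
    have h0 : (⇑(CongAux.entriesMap K (Fin m)) ∘ fun j => congrTangentMap AK ((U j).map ψ))
        = fun j => fun x : Fin m × Fin m => φ (v j x) := by
      funext j x
      have hc := congrArg (fun M => M x.1 x.2) (hMφ j)
      simp only [Matrix.map_apply] at hc
      show CongAux.entriesMap K (Fin m) (congrTangentMap AK ((U j).map ψ)) x = φ (v j x)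
      rw [hvdef]
      exact hc.symm
    rw [h0]
    exact hindK1
  have hsK : Module.finrank k (LinearMap.range (congrTangentMap A))
      ≤ Module.finrank K (LinearMap.range (congrTangentMap AK)) :=
    CongAux.card_le_finrank_range _ _ hindKL
  -- step c : transfer the rank of δ at the certificate (specialization at X = 0)
  set w : Fin (m/2 + 1) → ℕ → Polynomial k := fun l d =>
    (CongAux.deltaFun Ap ((Cs l).map (Polynomial.C : k → Polynomial k))).coeff d with hwdef
  have hδ0 : ∀ l, (CongAux.deltaFun Ap
      ((Cs l).map (Polynomial.C : k → Polynomial k))).map (Polynomial.evalRingHom (0:k))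
      = CongAux.deltaFun A₀ (Cs l) := by
    intro l
    rw [CongAux.deltaFun_map, hA0, CongAux.map_C_eval]
  have hindk2 : LinearIndependent k fun l => fun d : ℕ => (w l d).eval 0 := by
    have h0 : (fun l => fun d : ℕ => (w l d).eval 0)
        = fun l => CongAux.coeffsMap k (CongAux.deltaFun A₀ (Cs l)) := by
      funext l d
      have hc := congrArg (fun p => Polynomial.coeff p d) (hδ0 l)
      simp only [Polynomial.coeff_map] at hc
      exact hc
    rw [h0]
    exact hcert.map' _ (CongAux.coeffsMap_ker k)
  have hindK2 := CongAux.indep_up 0 w hindk2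
  have hδφ : ∀ l, (CongAux.deltaFun Ap ((Cs l).map (Polynomial.C : k → Polynomial k))).map φ
      = CongAux.deltaFun AK ((Cs l).map ψ) := by
    intro l
    rw [CongAux.deltaFun_map φ, Matrix.map_map]
    rfl
  have hindKd : LinearIndependent K fun l => CongAux.deltaLin AK ((Cs l).map ψ) := by
    refine LinearIndependent.of_comp (CongAux.coeffsMap K) ?_
    have h0 : (⇑(CongAux.coeffsMap K) ∘ fun l => CongAux.deltaLin AK ((Cs l).map ψ))
        = fun l => fun d : ℕ => φ (w l d) := by
      funext l d
      have hc := congrArg (fun p => Polynomial.coeff p d) (hδφ l)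
      simp only [Polynomial.coeff_map] at hc
      exact hc.symm
    rw [h0]
    exact hindK2
  have hdK : m/2 + 1 ≤ Module.finrank K (LinearMap.range (CongAux.deltaLin AK)) :=
    CongAux.card_le_finrank_range _ _ hindKd
  have hmain := CongAux.main_ineq AK
  have hrn := LinearMap.finrank_range_add_finrank_ker (congrTangentMap A)
  have hdim : Module.finrank k (Matrix (Fin m) (Fin m) k) = m * m := by
    rw [Module.finrank_matrix]
    simp
  rw [hdim] at hrn
  omega
end
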